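/- Let P be a complex polynomial of degree d ≥ 2 with zeros z_1,…,z_d (with multiplicity) and let w_1,…,w_{d-1} be the zeros of P' (with multiplicity). Then for any convex function f : ℂ → ℝ, d · Σ_{j=1}^{d-1} f(w_j) ≤ (d-1) · Σ_{i=1}^{d} f(z_i). -/

import Mathlib

open Matrix Polynomial
noncomputable section
namespace DRM

lemma eval_charpoly {n : ℕ} (M : Matrix (Fin n) (Fin n) ℂ) (t : ℂ) :
    M.charpoly.eval t = (t • (1 : Matrix (Fin n) (Fin n) ℂ) - M).det := by
  rw [Matrix.charpoly, ← Polynomial.coe_evalRingHom, RingHom.map_det]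
  congr 1
  ext i j
  by_cases h : i = j
  · subst h; simp [Matrix.charmatrix_apply_eq]
  · simp [Matrix.charmatrix_apply_ne _ _ _ h, Matrix.one_apply_ne h]

lemma conj_sandwich_apply {m k : Type*} [Fintype m] [Fintype k] (A : Matrix m k ℂ)
    (M : Matrix m m ℂ) (i j : k) :
    (Aᴴ * M * A) i j = ∑ p, ∑ q, (starRingEnd ℂ) (A p i) * M p q * A q j := by
  simp only [Matrix.mul_apply, Matrix.conjTranspose_apply, Finset.sum_mul]
  rw [Finset.sum_comm]
  exact Finset.sum_congr rfl fun p _ => Finset.sum_congr rfl fun q _ => by rw [starRingEnd_apply]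

lemma col_unitary {n : ℕ} (b : OrthonormalBasis (Fin n) ℂ (EuclideanSpace ℂ (Fin n))) :
    (Matrix.of fun i j => b j i)ᴴ * (Matrix.of fun i j => b j i) = 1 := by
  ext j k
  have h := orthonormal_iff_ite.mp b.orthonormal j k
  rw [PiLp.inner_apply] at h
  simp only [Matrix.mul_apply, Matrix.conjTranspose_apply, Matrix.of_apply, Matrix.one_apply]
  simpa [RCLike.inner_apply, mul_comm] using h


lemma embed_unitary {n : ℕ} (V : Matrix (Fin n) (Fin n) ℂ) (hV : Vᴴ * V = 1) :
    ∃ E : Matrix (Fin (n+1)) (Fin (n+1)) ℂ, Eᴴ * E = 1 ∧ E 0 0 = 1 ∧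
      (∀ i' : Fin n, E i'.succ 0 = 0) ∧ (∀ j' : Fin n, E 0 j'.succ = 0) ∧
      (∀ i' j' : Fin n, E i'.succ j'.succ = V i' j') := by
  set E : Matrix (Fin (n+1)) (Fin (n+1)) ℂ := Matrix.of
    (fun i j : Fin (n+1) => Fin.cases (Fin.cases (1:ℂ) (fun _ => 0) j)
      (fun i' => Fin.cases 0 (fun j' => V i' j') j) i) with hEdef
  have hE00 : E 0 0 = 1 := rfl
  have hE0s : ∀ j' : Fin n, E 0 j'.succ = 0 := fun _ => rfl
  have hEs0 : ∀ i' : Fin n, E i'.succ 0 = 0 := fun _ => rfl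
  have hEss : ∀ i' j' : Fin n, E i'.succ j'.succ = V i' j' := fun _ _ => rfl
  refine ⟨E, ?_, hE00, hEs0, hE0s, hEss⟩
  ext a c
  rw [Matrix.mul_apply, Fin.sum_univ_succ]
  induction a using Fin.cases with
  | zero =>
    induction c using Fin.cases with
    | zero => simp [Matrix.conjTranspose_apply, hE00, hEs0]
    | succ c' => simp [Matrix.conjTranspose_apply, hE00, hE0s, hEs0,
        Matrix.one_apply, (Fin.succ_ne_zero c').symm]
  | succ a' =>
    induction c using Fin.cases with
    | zero => simp [Matrix.conjTranspose_apply, hE0s, hEs0, Matrix.one_apply,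
        Fin.succ_ne_zero a']
    | succ c' =>
      have := congrFun (congrFun hV a') c'
      rw [Matrix.mul_apply] at this
      simp only [Matrix.conjTranspose_apply] at this
      simp only [Matrix.conjTranspose_apply, hE0s, hEs0, hEss, star_zero, zero_mul, zero_add]
      rw [this]
      simp [Matrix.one_apply, Fin.succ_inj]

/-- Schur triangularization over ℂ. -/
lemma schur (n : ℕ) : ∀ D : Matrix (Fin n) (Fin n) ℂ,
    ∃ V : Matrix (Fin n) (Fin n) ℂ, Vᴴ * V = 1 ∧
      ∀ ⦃i j : Fin n⦄, j < i → (Vᴴ * D * V) i j = 0 := by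
  induction n with
  | zero => exact fun D => ⟨1, by simp, fun i j _ => i.elim0⟩
  | succ n ih =>
    intro D
    -- find an eigenvalue
    obtain ⟨μ, hμ⟩ := IsAlgClosed.exists_root D.charpoly
      (Polynomial.natDegree_pos_iff_degree_pos.mp
        (by simp [Matrix.charpoly_natDegree_eq_dim])).ne'
    have hdet : (μ • (1 : Matrix (Fin (n+1)) (Fin (n+1)) ℂ) - D).det = 0 := by
      rw [← eval_charpoly]; exact hμ
    obtain ⟨x0, hx0ne, hx0e⟩ := Matrix.exists_mulVec_eq_zero_iff.mpr hdet
    have heig0 : D.mulVec x0 = μ • x0 := by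
      have := hx0e
      rw [Matrix.sub_mulVec, sub_eq_zero, Matrix.smul_mulVec, Matrix.one_mulVec] at this
      exact this.symm
    -- normalize
    set X0 : EuclideanSpace ℂ (Fin (n+1)) := WithLp.toLp 2 x0 with hX0
    have hX0ne : X0 ≠ 0 := by
      intro h; exact hx0ne (by funext i; exact congrFun (congrArg WithLp.ofLp h) i)
    set x : EuclideanSpace ℂ (Fin (n+1)) := (‖X0‖⁻¹ : ℂ) • X0 with hxdef
    have hxnorm : ‖x‖ = 1 := norm_smul_inv_norm hX0ne
    have heig : D.mulVec x = μ • x := by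
      show D.mulVec ((‖X0‖⁻¹ : ℂ) • x0) = μ • ((‖X0‖⁻¹ : ℂ) • x0)
      rw [Matrix.mulVec_smul, heig0, smul_comm]
    -- extend to an orthonormal basis
    have hON : Orthonormal ℂ (({0} : Set (Fin (n+1))).restrict fun _ => x) := by
      rw [orthonormal_iff_ite]
      intro i j
      have hij : i = j := Subtype.ext (by
        have h1 := i.2; have h2 := j.2
        simp only [Set.mem_singleton_iff] at h1 h2
        rw [h1, h2])
      subst hij
      rw [show ({0} : Set (Fin (n+1))).restrict (fun _ => x) i = x from rfl]
      simp [inner_self_eq_norm_sq_to_K, hxnorm]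
    obtain ⟨b, hb⟩ := hON.exists_orthonormalBasis_extension_of_card_eq
      (by simp [finrank_euclideanSpace_fin])
    have hb0 : b 0 = x := hb 0 rfl
    set W : Matrix (Fin (n+1)) (Fin (n+1)) ℂ := Matrix.of fun i j => b j i with hWdef
    have hW : Wᴴ * W = 1 := col_unitary b
    set C : Matrix (Fin (n+1)) (Fin (n+1)) ℂ := Wᴴ * D * W with hCdef
    -- first column of C is (μ, 0, ..., 0)ᵀ
    have hC0 : ∀ i : Fin (n+1), i ≠ 0 → C i 0 = 0 := by
      intro i hi
      have hinner : ((inner ℂ (b i) (b 0) : ℂ)) = 0 := by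
        rw [orthonormal_iff_ite.mp b.orthonormal i 0]
        simp [hi]
      rw [hCdef, conj_sandwich_apply]
      have : ∀ p, ∑ q, (starRingEnd ℂ) (W p i) * D p q * W q 0
          = (starRingEnd ℂ) (b i p) * (μ • x) p := by
        intro p
        have hmv : (D.mulVec x) p = ∑ q, D p q * x q := rfl
        have : ∑ q, (starRingEnd ℂ) (W p i) * D p q * W q 0
            = (starRingEnd ℂ) (b i p) * ∑ q, D p q * x q := by
          rw [Finset.mul_sum]
          refine Finset.sum_congr rfl fun q _ => ?_
          simp only [hWdef, Matrix.of_apply, hb0]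
          ring
        rw [this, ← hmv, heig]; rfl
      rw [Finset.sum_congr rfl fun p _ => this p]
      have : ∑ p, (starRingEnd ℂ) (b i p) * (μ • x) p = μ * (inner ℂ (b i) (b 0) : ℂ) := by
        rw [PiLp.inner_apply, hb0, Finset.mul_sum]
        refine Finset.sum_congr rfl fun p _ => ?_
        simp [RCLike.inner_apply]
        ring
      rw [this, hinner, mul_zero]
    -- recurse
    obtain ⟨V', hV'1, hV'2⟩ := ih (C.submatrix Fin.succ Fin.succ)
    obtain ⟨E, hE1, hE00, hEs0, hE0s, hEss⟩ := embed_unitary V' hV'1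
    refine ⟨W * E, ?_, ?_⟩
    · rw [Matrix.conjTranspose_mul, Matrix.mul_assoc, ← Matrix.mul_assoc Wᴴ W E, hW,
        Matrix.one_mul, hE1]
    · intro i j hji
      have hre : (W * E)ᴴ * D * (W * E) = Eᴴ * C * E := by
        rw [hCdef, Matrix.conjTranspose_mul]
        noncomm_ring
      rw [hre]
      induction i using Fin.cases with
      | zero => exact absurd hji (Fin.not_lt_zero j)
      | succ a =>
        induction j using Fin.cases with
        | zero =>
          rw [conj_sandwich_apply]
          refine Finset.sum_eq_zero fun p _ => ?_
          induction p using Fin.cases with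
          | zero => simp [hE0s]
          | succ p' =>
            refine Finset.sum_eq_zero fun q _ => ?_
            induction q using Fin.cases with
            | zero => rw [hC0 p'.succ (Fin.succ_ne_zero p'), mul_zero, zero_mul]
            | succ q' => simp [hEs0]
        | succ c =>
          have hca : c < a := by rwa [Fin.succ_lt_succ_iff] at hji
          rw [conj_sandwich_apply]
          have hz := hV'2 hca
          rw [conj_sandwich_apply] at hz
          rw [← hz]
          rw [Fin.sum_univ_succ]
          simp only [hE0s, map_zero, zero_mul, Finset.sum_const_zero, zero_add]
          refine Finset.sum_congr rfl fun p' _ => ?_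
          rw [Fin.sum_univ_succ]
          simp only [hEs0, hE0s, mul_zero, zero_add, hEss]
          refine Finset.sum_congr rfl fun q' _ => ?_
          rw [Matrix.submatrix_apply]



lemma sandwich_diag {m k : Type*} [Fintype m] [DecidableEq m] [Fintype k] (A : Matrix m k ℂ)
    (w : m → ℂ) (i j : k) :
    (Aᴴ * Matrix.diagonal w * A) i j = ∑ p, (starRingEnd ℂ) (A p i) * w p * A p j := by
  rw [conj_sandwich_apply]
  refine Finset.sum_congr rfl fun p _ => ?_
  rw [Finset.sum_eq_single p]
  · rw [Matrix.diagonal_apply_eq]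
  · intro q _ hq
    rw [Matrix.diagonal_apply_ne _ (Ne.symm hq), mul_zero, zero_mul]
  · intro h; exact absurd (Finset.mem_univ p) h

lemma charpoly_unitary_conj {n : ℕ} (V D : Matrix (Fin n) (Fin n) ℂ) (hV : Vᴴ * V = 1) :
    (Vᴴ * D * V).charpoly = D.charpoly := by
  have hV' : V * Vᴴ = 1 := mul_eq_one_comm.mp hV
  have hdet1 : (Vᴴ.map (Polynomial.C : ℂ → ℂ[X])).det * (V.map Polynomial.C).det = 1 := by
    rw [← Matrix.det_mul, ← Matrix.map_mul, hV, Matrix.map_one _ (map_zero _) (map_one _),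
      Matrix.det_one]
  have key : Matrix.charmatrix (Vᴴ * D * V)
      = Vᴴ.map Polynomial.C * Matrix.charmatrix D * V.map Polynomial.C := by
    unfold Matrix.charmatrix
    rw [Matrix.mul_sub, Matrix.sub_mul]
    congr 1
    · have hcomm : Commute (Matrix.scalar (Fin n) (Polynomial.X : ℂ[X]))
          (Vᴴ.map Polynomial.C) := (Matrix.scalar_commute _ (fun r' => Commute.all _ _) _)
      rw [Matrix.mul_assoc] at *
      calc Matrix.scalar (Fin n) (Polynomial.X : ℂ[X])
          = Matrix.scalar (Fin n) (Polynomial.X : ℂ[X]) * (Vᴴ.map Polynomial.C * V.map Polynomial.C) := by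
            rw [← Matrix.map_mul, hV, Matrix.map_one _ (map_zero _) (map_one _), Matrix.mul_one]
        _ = Vᴴ.map Polynomial.C * (Matrix.scalar (Fin n) (Polynomial.X : ℂ[X]) * V.map Polynomial.C) := by
            rw [← Matrix.mul_assoc, hcomm.eq, Matrix.mul_assoc]
    · show (RingHom.mapMatrix (Polynomial.C : ℂ →+* ℂ[X])) (Vᴴ * D * V)
        = Vᴴ.map Polynomial.C * (RingHom.mapMatrix (Polynomial.C : ℂ →+* ℂ[X])) D * V.map Polynomial.C
      rw [_root_.map_mul, _root_.map_mul]
      rfl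
  unfold Matrix.charpoly
  rw [key, Matrix.det_mul, Matrix.det_mul]
  ring_nf
  rw [mul_comm] at hdet1
  calc (Vᴴ.map Polynomial.C).det * (Matrix.charmatrix D).det * (V.map Polynomial.C).det
      = (Matrix.charmatrix D).det * ((V.map Polynomial.C).det * (Vᴴ.map Polynomial.C).det) := by ring
    _ = (Matrix.charmatrix D).det := by rw [hdet1, mul_one]

end DRM

theorem derivative_roots_majorized (P : Polynomial ℂ) (hd : 2 ≤ P.natDegree)
    (f : ℂ → ℝ) (hf : ConvexOn ℝ Set.univ f) :
    (P.natDegree : ℝ) * ((P.derivative.roots.map f).sum) ≤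
      ((P.natDegree : ℝ) - 1) * ((P.roots.map f).sum) := by
  classical
  obtain ⟨n, hn⟩ : ∃ n : ℕ, P.natDegree = n + 1 := ⟨P.natDegree - 1, by omega⟩
  have hP0 : P ≠ 0 := fun h => by simp [h] at hd
  have hlc : P.leadingCoeff ≠ 0 := Polynomial.leadingCoeff_ne_zero.mpr hP0
  have hsplits : P.Splits := IsAlgClosed.splits P
  have hcard : P.roots.card = n + 1 := by
    have h := hsplits.natDegree_eq_card_roots
    omega
  set L := P.roots.toList with hLdef
  have hLlen : L.length = n + 1 := by rw [hLdef, Multiset.length_toList, hcard]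
  set z : Fin (n+1) → ℂ := fun i => L.get (Fin.cast hLlen.symm i) with hzdef
  have hofFn : List.ofFn z = L := by
    apply List.ext_get (by simp [hLlen])
    intro i h1 h2
    rw [List.get_ofFn]
    rfl
  have hroots : P.roots = ↑(List.ofFn z) := by rw [hofFn, hLdef, Multiset.coe_toList]
  have hPfac : P = Polynomial.C P.leadingCoeff
      * ∏ i : Fin (n+1), (Polynomial.X - Polynomial.C (z i)) := by
    conv_lhs => rw [hsplits.eq_prod_roots]
    congr 1
    rw [hroots, Multiset.map_coe, Multiset.prod_coe, List.map_ofFn, List.prod_ofFn]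
    rfl
  have hsum1 : (P.roots.map f).sum = ∑ i, f (z i) := by
    rw [hroots, Multiset.map_coe, Multiset.sum_coe, List.map_ofFn, List.sum_ofFn]
    rfl
  -- the normalized all-ones vector
  set v : EuclideanSpace ℂ (Fin (n+1)) := WithLp.toLp 2 (fun _ => (((Real.sqrt (n+1))⁻¹ : ℝ) : ℂ)) with hvdef
  have hsq : Real.sqrt (n+1) * Real.sqrt (n+1) = (n+1 : ℝ) :=
    Real.mul_self_sqrt (by positivity)
  have hvns : ∀ i, (starRingEnd ℂ) (v i) * v i = (((n+1 : ℝ)⁻¹ : ℝ) : ℂ) := by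
    intro i
    rw [hvdef]
    simp only
    rw [Complex.conj_ofReal, ← Complex.ofReal_mul, ← mul_inv, hsq]
  have hvnorm : ‖v‖ = 1 := by
    rw [EuclideanSpace.norm_eq]
    have h1 : ∀ i : Fin (n+1), ‖v i‖ = (Real.sqrt (n+1))⁻¹ := by
      intro i
      rw [hvdef]
      simp only
      rw [Complex.norm_real]
      exact abs_of_nonneg (by positivity)
    rw [Finset.sum_congr rfl fun i _ => by rw [h1 i]]
    rw [Finset.sum_const, Finset.card_univ, Fintype.card_fin, nsmul_eq_mul]
    rw [show ((n+1 : ℕ) : ℝ) * ((Real.sqrt (n+1))⁻¹) ^ 2 = 1 by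
      rw [sq, ← mul_inv, hsq]
      push_cast
      field_simp]
    exact Real.sqrt_one
  have hON : Orthonormal ℂ (({0} : Set (Fin (n+1))).restrict fun _ => v) := by
    rw [orthonormal_iff_ite]
    intro i j
    have hij : i = j := Subtype.ext (by
      have h1 := i.2; have h2 := j.2
      simp only [Set.mem_singleton_iff] at h1 h2
      rw [h1, h2])
    subst hij
    rw [show ({0} : Set (Fin (n+1))).restrict (fun _ => v) i = v from rfl]
    simp [inner_self_eq_norm_sq_to_K, hvnorm]
  obtain ⟨b, hb⟩ := hON.exists_orthonormalBasis_extension_of_card_eq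
    (by simp [finrank_euclideanSpace_fin])
  have hb0 : b 0 = v := hb 0 rfl
  set U : Matrix (Fin (n+1)) (Fin (n+1)) ℂ := Matrix.of fun i j => b j i with hUdef
  have hU : Uᴴ * U = 1 := DRM.col_unitary b
  have hU' : U * Uᴴ = 1 := mul_eq_one_comm.mp hU
  set A : Matrix (Fin (n+1)) (Fin (n+1)) ℂ := Matrix.diagonal z with hAdef
  set Cm : Matrix (Fin (n+1)) (Fin (n+1)) ℂ := Uᴴ * A * U with hCmdef
  set D : Matrix (Fin n) (Fin n) ℂ := Cm.submatrix Fin.succ Fin.succ with hDdef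
  set c : ℂ := (((n+1 : ℕ) : ℂ) * P.leadingCoeff)⁻¹ with hcdef
  have hnc0 : ((n+1 : ℕ) : ℂ) ≠ 0 := Nat.cast_ne_zero.mpr (Nat.succ_ne_zero n)
  have hc0 : c ≠ 0 := inv_ne_zero (mul_ne_zero hnc0 hlc)
  -- the characteristic polynomial of the compression
  have hchar : D.charpoly = c • Polynomial.derivative P := by
    -- derivative of P
    have hderQ : Polynomial.derivative (∏ i : Fin (n+1), (Polynomial.X - Polynomial.C (z i)))
        = ∑ p : Fin (n+1), ∏ i ∈ Finset.univ.erase p, (Polynomial.X - Polynomial.C (z i)) := by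
      rw [Finset.prod_eq_multiset_prod, Polynomial.derivative_prod, Finset.sum_eq_multiset_sum]
      apply congrArg Multiset.sum
      apply Multiset.map_congr rfl
      intro p _
      rw [Polynomial.derivative_sub, Polynomial.derivative_X, Polynomial.derivative_C, sub_zero,
        mul_one, ← Finset.erase_val, ← Finset.prod_eq_multiset_prod]
    have hderP : Polynomial.derivative P = Polynomial.C P.leadingCoeff *
        ∑ p : Fin (n+1), ∏ i ∈ Finset.univ.erase p, (Polynomial.X - Polynomial.C (z i)) := by
      conv_lhs => rw [hPfac]
      rw [Polynomial.derivative_C_mul, hderQ]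
    apply Polynomial.eq_of_infinite_eval_eq
    refine Set.Infinite.mono ?_ ((Set.finite_range z).infinite_compl)
    intro t ht
    have htz : ∀ i, t - z i ≠ 0 := by
      intro i
      rw [sub_ne_zero]
      exact fun h => ht (Set.mem_range.mpr ⟨i, h.symm⟩)
    show D.charpoly.eval t = (c • Polynomial.derivative P).eval t
    set Xm : Matrix (Fin (n+1)) (Fin (n+1)) ℂ := Matrix.diagonal (fun i => t - z i) with hXmdef
    have hXdet : Xm.det = ∏ i, (t - z i) := Matrix.det_diagonal
    have hXdet0 : Xm.det ≠ 0 := by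
      rw [hXdet]; exact Finset.prod_ne_zero_iff.mpr fun i _ => htz i
    have hXinv : Xm * Matrix.diagonal (fun i => (t - z i)⁻¹) = 1 := by
      rw [hXmdef, Matrix.diagonal_mul_diagonal,
        show (fun i => (t - z i) * (t - z i)⁻¹) = fun _ : Fin (n+1) => (1:ℂ) from
          funext fun i => mul_inv_cancel₀ (htz i), Matrix.diagonal_one]
    set Y : Matrix (Fin (n+1)) (Fin (n+1)) ℂ := Uᴴ * Xm * U with hYdef
    have hYeq : Y = t • (1 : Matrix (Fin (n+1)) (Fin (n+1)) ℂ) - Cm := by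
      have hXm1 : Xm = t • (1 : Matrix (Fin (n+1)) (Fin (n+1)) ℂ) - A := by
        ext i j
        by_cases h : i = j
        · subst h
          simp [hXmdef, hAdef, Matrix.diagonal_apply_eq, Matrix.one_apply_eq]
        · simp [hXmdef, hAdef, Matrix.diagonal_apply_ne _ h, Matrix.one_apply_ne h]
      rw [hYdef, hXm1, Matrix.mul_sub, Matrix.sub_mul, hCmdef]
      congr 1
      rw [Matrix.mul_smul, Matrix.smul_mul, Matrix.mul_one, hU]
    have hdetY : Y.det = Xm.det := by
      have h1 : Uᴴ.det * U.det = 1 := by rw [← Matrix.det_mul, hU, Matrix.det_one]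
      rw [hYdef, Matrix.det_mul, Matrix.det_mul]
      calc Uᴴ.det * Xm.det * U.det = Xm.det * (Uᴴ.det * U.det) := by ring
        _ = Xm.det := by rw [h1, mul_one]
    have hYdet0 : Y.det ≠ 0 := by rw [hdetY]; exact hXdet0
    have hYinv : Y⁻¹ = Uᴴ * Matrix.diagonal (fun i => (t - z i)⁻¹) * U := by
      apply Matrix.inv_eq_right_inv
      rw [hYdef]
      calc Uᴴ * Xm * U * (Uᴴ * Matrix.diagonal (fun i => (t - z i)⁻¹) * U)
          = Uᴴ * ((Xm * (U * Uᴴ)) * Matrix.diagonal (fun i => (t - z i)⁻¹)) * U := by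
            simp only [Matrix.mul_assoc]
        _ = 1 := by rw [hU', Matrix.mul_one, hXinv, Matrix.mul_one, hU]
    have hL1 : D.charpoly.eval t = (Y.submatrix Fin.succ Fin.succ).det := by
      rw [DRM.eval_charpoly]
      congr 1
      rw [hYeq]
      ext i j
      simp only [Matrix.submatrix_apply, Matrix.sub_apply, Matrix.smul_apply, hDdef]
      congr 1
      by_cases h : i = j
      · subst h; simp
      · rw [Matrix.one_apply_ne h, Matrix.one_apply_ne fun hc => h (Fin.succ_injective _ hc)]
    have hL2 : (Y.submatrix Fin.succ Fin.succ).det = Y.adjugate 0 0 := by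
      rw [Matrix.adjugate_fin_succ_eq_det_submatrix]
      simp [Fin.succAbove_zero]
    have hL3 : Y.adjugate 0 0 = Y.det * Y⁻¹ 0 0 := by
      rw [Matrix.inv_def, Ring.inverse_eq_inv]
      simp only [Matrix.smul_apply, smul_eq_mul]
      rw [← mul_assoc, mul_inv_cancel₀ hYdet0, one_mul]
    have hY00 : Y⁻¹ 0 0 = ∑ p, (((n+1:ℝ)⁻¹ : ℝ) : ℂ) * (t - z p)⁻¹ := by
      rw [hYinv, DRM.sandwich_diag]
      refine Finset.sum_congr rfl fun p _ => ?_
      have hU0 : U p 0 = v p := by rw [hUdef]; show b 0 p = v p; rw [hb0]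
      rw [hU0]
      calc (starRingEnd ℂ) (v p) * (t - z p)⁻¹ * v p
          = ((starRingEnd ℂ) (v p) * v p) * (t - z p)⁻¹ := by ring
        _ = (((n+1:ℝ)⁻¹ : ℝ) : ℂ) * (t - z p)⁻¹ := by rw [hvns p]
    have hcastinv : (((n+1:ℝ)⁻¹ : ℝ) : ℂ) = ((n+1 : ℕ) : ℂ)⁻¹ := by push_cast; ring
    calc D.charpoly.eval t = Y.det * Y⁻¹ 0 0 := by rw [hL1, hL2, hL3]
      _ = ∑ p, ((n+1 : ℕ) : ℂ)⁻¹ * ((∏ i, (t - z i)) * (t - z p)⁻¹) := by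
          rw [hY00, Finset.mul_sum, hdetY, hXdet]
          exact Finset.sum_congr rfl fun p _ => by rw [hcastinv]; ring
      _ = ∑ p, ((n+1 : ℕ) : ℂ)⁻¹ * ∏ i ∈ Finset.univ.erase p, (t - z i) := by
          refine Finset.sum_congr rfl fun p _ => ?_
          congr 1
          rw [← Finset.prod_erase_mul Finset.univ _ (Finset.mem_univ p), mul_assoc,
            mul_inv_cancel₀ (htz p), mul_one]
      _ = (c • Polynomial.derivative P).eval t := by
          rw [Polynomial.eval_smul, hderP, smul_eq_mul, Polynomial.eval_mul, Polynomial.eval_C]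
          rw [Polynomial.eval_finset_sum]
          rw [Finset.mul_sum, Finset.mul_sum]
          refine Finset.sum_congr rfl fun p _ => ?_
          rw [Polynomial.eval_prod]
          have : ∀ i ∈ Finset.univ.erase p,
              Polynomial.eval t (Polynomial.X - Polynomial.C (z i)) = t - z i := fun i _ => by
            rw [Polynomial.eval_sub, Polynomial.eval_X, Polynomial.eval_C]
          rw [Finset.prod_congr rfl this, hcdef, mul_inv, mul_assoc, ← mul_assoc P.leadingCoeff⁻¹,
            inv_mul_cancel₀ hlc, one_mul]
  have hrootsD : D.charpoly.roots = P.derivative.roots := by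
    rw [hchar, Polynomial.roots_smul_nonzero _ hc0]
  obtain ⟨V, hV1, hV2⟩ := DRM.schur n D
  set T : Matrix (Fin n) (Fin n) ℂ := Vᴴ * D * V with hTdef
  have hBT : T.BlockTriangular id := fun i j h => hV2 h
  have hcharT : D.charpoly = ∏ i, (Polynomial.X - Polynomial.C (T i i)) := by
    rw [← DRM.charpoly_unitary_conj V D hV1, ← hTdef, Matrix.charpoly_of_upperTriangular T hBT]
  have hrootsT : P.derivative.roots = Multiset.map (fun i => T i i) Finset.univ.val := by
    rw [← hrootsD, hcharT, Finset.prod_eq_multiset_prod]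
    rw [show Multiset.map (fun i => Polynomial.X - Polynomial.C (T i i)) Finset.univ.val
        = Multiset.map (fun a => Polynomial.X - Polynomial.C a)
            (Multiset.map (fun i => T i i) Finset.univ.val) from
      (Multiset.map_map (fun a => Polynomial.X - Polynomial.C a)
        (fun i => T i i) Finset.univ.val).symm]
    exact Polynomial.roots_multiset_prod_X_sub_C _
  have hsum2 : (P.derivative.roots.map f).sum = ∑ j : Fin n, f (T j j) := by
    rw [hrootsT, Multiset.map_map, Finset.sum_eq_multiset_sum]
    rfl
  obtain ⟨E, hE1, hE00, hEs0, hE0s, hEss⟩ := DRM.embed_unitary V hV1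
  set W : Matrix (Fin (n+1)) (Fin (n+1)) ℂ := U * E with hWdef
  have hW1 : Wᴴ * W = 1 := by
    rw [hWdef, Matrix.conjTranspose_mul, Matrix.mul_assoc, ← Matrix.mul_assoc Uᴴ U E, hU,
      Matrix.one_mul, hE1]
  have hW2 : W * Wᴴ = 1 := mul_eq_one_comm.mp hW1
  have hWcol0 : ∀ i, W i 0 = v i := by
    intro i
    rw [hWdef, Matrix.mul_apply, Fin.sum_univ_succ, hE00, mul_one,
      Finset.sum_eq_zero (fun q _ => by rw [hEs0, mul_zero]), add_zero, hUdef]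
    show b 0 i = v i
    rw [hb0]
  have hsand : Wᴴ * A * W = Eᴴ * Cm * E := by
    rw [hWdef, hCmdef, Matrix.conjTranspose_mul]
    noncomm_ring
  have hTdiag : ∀ j : Fin n, T j j = ∑ i, z i * ((starRingEnd ℂ) (W i j.succ) * W i j.succ) := by
    intro j
    have h2 : (Eᴴ * Cm * E) j.succ j.succ = T j j := by
      show _ = (Vᴴ * D * V) j j
      rw [DRM.conj_sandwich_apply, DRM.conj_sandwich_apply, Fin.sum_univ_succ]
      simp only [hE0s, map_zero, zero_mul, Finset.sum_const_zero, zero_add]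
      refine Finset.sum_congr rfl fun p' _ => ?_
      rw [Fin.sum_univ_succ]
      simp only [hEs0, hE0s, mul_zero, zero_add, hEss]
      refine Finset.sum_congr rfl fun q' _ => ?_
      rw [hDdef, Matrix.submatrix_apply]
    have h1 : (Wᴴ * A * W) j.succ j.succ
        = ∑ i, (starRingEnd ℂ) (W i j.succ) * z i * W i j.succ := by
      rw [hAdef, DRM.sandwich_diag]
    calc T j j = (Eᴴ * Cm * E) j.succ j.succ := h2.symm
      _ = (Wᴴ * A * W) j.succ j.succ := by rw [hsand]
      _ = ∑ i, (starRingEnd ℂ) (W i j.succ) * z i * W i j.succ := h1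
      _ = ∑ i, z i * ((starRingEnd ℂ) (W i j.succ) * W i j.succ) :=
          Finset.sum_congr rfl fun i _ => by ring
  set S : Fin n → Fin (n+1) → ℝ := fun j i => Complex.normSq (W i j.succ) with hSdef
  have hconj : ∀ w : ℂ, (starRingEnd ℂ) w * w = (Complex.normSq w : ℂ) := fun w => by
    rw [mul_comm, Complex.mul_conj]
  have hrow : ∀ j, ∑ i, S j i = 1 := by
    intro j
    have h := congrFun (congrFun hW1 j.succ) j.succ
    rw [Matrix.mul_apply] at h
    simp only [Matrix.conjTranspose_apply, Matrix.one_apply_eq] at h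
    have h2 : ((∑ i, S j i : ℝ) : ℂ) = 1 := by
      push_cast
      rw [← h]
      exact Finset.sum_congr rfl fun i _ => by rw [← hconj, starRingEnd_apply]
    exact_mod_cast h2
  have hvnsR : ∀ i, (Complex.normSq (v i) : ℝ) = (n+1 : ℝ)⁻¹ := by
    intro i
    have h := hvns i
    rw [hconj] at h
    exact_mod_cast h
  have hcol : ∀ i, ∑ j, S j i = 1 - (n+1 : ℝ)⁻¹ := by
    intro i
    have h := congrFun (congrFun hW2 i) i
    rw [Matrix.mul_apply, Fin.sum_univ_succ] at h
    simp only [Matrix.conjTranspose_apply, Matrix.one_apply_eq] at h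
    have hterm : ∀ q : Fin (n+1), W i q * star (W i q)
        = ((Complex.normSq (W i q) : ℝ) : ℂ) := by
      intro q
      rw [← starRingEnd_apply, Complex.mul_conj]
    rw [hterm 0, hWcol0 i] at h
    have h2 : ((Complex.normSq (v i) + ∑ j, S j i : ℝ) : ℂ) = ((1 : ℝ) : ℂ) := by
      push_cast
      rw [← h]
      congr 1
      exact Finset.sum_congr rfl fun j _ => (hterm j.succ).symm
    have h3 : Complex.normSq (v i) + ∑ j, S j i = 1 := by exact_mod_cast h2
    rw [hvnsR i] at h3
    linarith
  have hJ : ∀ j, f (T j j) ≤ ∑ i, S j i * f (z i) := by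
    intro j
    have hTj : T j j = ∑ i, S j i • z i := by
      rw [hTdiag j]
      refine Finset.sum_congr rfl fun i _ => ?_
      rw [hconj, hSdef]
      simp only
      rw [Complex.real_smul]
      ring
    rw [hTj]
    have := hf.map_sum_le (t := Finset.univ) (w := S j) (p := z)
      (fun i _ => Complex.normSq_nonneg _) (hrow j) (fun i _ => Set.mem_univ _)
    simpa [smul_eq_mul] using this
  have hmain : ∑ j, f (T j j) ≤ (1 - (n+1 : ℝ)⁻¹) * ∑ i, f (z i) := by
    calc ∑ j, f (T j j) ≤ ∑ j, ∑ i, S j i * f (z i) := Finset.sum_le_sum fun j _ => hJ j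
      _ = ∑ i, (∑ j, S j i) * f (z i) := by
          rw [Finset.sum_comm]
          exact Finset.sum_congr rfl fun i _ => (Finset.sum_mul _ _ _).symm
      _ = ∑ i, (1 - (n+1 : ℝ)⁻¹) * f (z i) :=
          Finset.sum_congr rfl fun i _ => by rw [hcol i]
      _ = (1 - (n+1 : ℝ)⁻¹) * ∑ i, f (z i) := (Finset.mul_sum _ _ _).symm
  rw [hn, hsum1, hsum2]
  have hpos : (0:ℝ) ≤ ((n+1 : ℕ) : ℝ) := by positivity
  calc ((n+1:ℕ):ℝ) * ∑ j, f (T j j)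
      ≤ ((n+1:ℕ):ℝ) * ((1 - (n+1 : ℝ)⁻¹) * ∑ i, f (z i)) :=
        mul_le_mul_of_nonneg_left hmain hpos
    _ = (((n+1:ℕ):ℝ) - 1) * ∑ i, f (z i) := by
        rw [← mul_assoc]
        congr 1
        push_cast
        have hne : (n:ℝ) + 1 ≠ 0 := by positivity
        field_simp
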